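/- Let G be a countable group, let A be a finite alphabet, and let Y ⊆ A^G be a subshift that is an SFT witnessed by a finite set K ⊆ G. Let y₁, y₂ ∈ Y and let F ⊆ G be a finite subset. If y₁ and y₂ agree on ∂_{KK⁻¹}F (i.e. y₁(g) = y₂(g) for all g ∈ ∂_{KK⁻¹}F), then the point y ∈ A^G defined by y(g) = y₁(g) for g ∈ F and y(g) = y₂(g) for g ∈ G \ F belongs to Y. -/
import Mathlib


open Pointwise

/-- The shift action of a group `G` on `G → A`: `σ^g(x)(h) = x(hg)`. -/
def shiftMap {G A : Type*} [Group G] (g : G) (x : G → A) : G → A := fun h => x (h * g)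

/-- A subshift: a closed, shift-invariant subset of the full shift `A^G`. -/
def IsSubshift {G A : Type*} [Group G] [TopologicalSpace A] (X : Set (G → A)) : Prop :=
  IsClosed X ∧ ∀ g : G, shiftMap g '' X = X

/-- `P(F, X)`: the set of patterns of shape `F` appearing in points of `X`,
i.e. the restrictions of points of `X` to `F`. -/
def patterns {G A : Type*} [Group G] (F : Finset G) (X : Set (G → A)) : Set (F → A) :=
  (fun x => fun f : F => x ↑f) '' X

/-- The `K`-boundary of a finite subset `F` of a group: `∂_K F = {f ∈ F : Kf ⊄ F}`. -/
def Finset.groupBoundary {G : Type*} [Group G] [DecidableEq G] (K F : Finset G) : Finset G :=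
  F.filter fun f => ¬ ∀ k ∈ K, k * f ∈ F

/-- `Y` is an SFT witnessed by the finite set `K`: every `x ∈ A^G` all of whose `K`-patterns
are allowed in `Y` belongs to `Y`. -/
def IsSFTWitnessedBy {G A : Type*} [Group G] (Y : Set (G → A)) (K : Finset G) : Prop :=
  ∀ x : G → A, (∀ g : G, (fun k : K => shiftMap g x ↑k) ∈ patterns K Y) → x ∈ Y

/-- If `Y` is an SFT witnessed by `K` and `y₁, y₂ ∈ Y` agree on
`∂_{KK⁻¹} F`, then the point equal to `y₁` on `F` and to `y₂` off `F` belongs to `Y`. -/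
theorem sft_excision {G A : Type*} [Group G] [Countable G] [DecidableEq G]
    [Fintype A] [Nonempty A] [TopologicalSpace A] [DiscreteTopology A]
    (Y : Set (G → A)) (hY : IsSubshift Y) (K : Finset G) (hSFT : IsSFTWitnessedBy Y K)
    (y₁ y₂ : G → A) (hy₁ : y₁ ∈ Y) (hy₂ : y₂ ∈ Y) (F : Finset G)
    (hagree : ∀ g ∈ Finset.groupBoundary (K * K⁻¹) F, y₁ g = y₂ g) :
    (fun g => if g ∈ F then y₁ g else y₂ g) ∈ Y := by
  apply hSFT
  intro g
  by_cases h : ∀ k ∈ K, k * g ∈ F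
  · refine ⟨shiftMap g y₁, ?_, ?_⟩
    · rw [← hY.2 g]; exact Set.mem_image_of_mem _ hy₁
    · funext k
      simp only [shiftMap]
      rw [if_pos (h k k.2)]
  · push_neg at h
    obtain ⟨k₂, hk₂K, hk₂F⟩ := h
    refine ⟨shiftMap g y₂, ?_, ?_⟩
    · rw [← hY.2 g]; exact Set.mem_image_of_mem _ hy₂
    · funext k
      simp only [shiftMap]
      split_ifs with hkF
      · symm; apply hagree
        simp only [Finset.groupBoundary, Finset.mem_filter]
        refine ⟨hkF, ?_⟩
        push_neg
        exact ⟨k₂ * (↑k)⁻¹, Finset.mul_mem_mul hk₂K (Finset.inv_mem_inv k.2),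
          by simpa [mul_assoc] using hk₂F⟩
      · rfl
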